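/- Let 1 < p < 2, D₁ ≥ D₂ > 0, D ≥ 0, and let v : ℝ^N → [0,∞) be a measurable function satisfying V_{D₁}(y) ≤ v(y) ≤ V_{D₂}(y) for all |y| ≥ 1. Then there exists a constant C = C(D, D₁, D₂, p) > 0 such that |v(y) − V_D(y)| ≤ C · |y|^{−p/((p−1)(2−p))} for all |y| ≥ 1. -/
import Mathlib

lemma key_lip (a α D D' : ℝ) (ha : 0 < a) (hα : 0 < α) (hD : 0 ≤ D) (hD' : 0 ≤ D') :
    |(D + a) ^ (-α) - (D' + a) ^ (-α)| ≤ α * a ^ (-α - 1) * |D - D'| := by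
  have hconv : Convex ℝ (Set.Ici (0 : ℝ)) := convex_Ici 0
  have hderiv : ∀ x ∈ Set.Ici (0 : ℝ),
      HasDerivWithinAt (fun x : ℝ => (x + a) ^ (-α))
        (-α * (x + a) ^ (-α - 1)) (Set.Ici 0) x := by
    intro x hx
    have hxa : (0 : ℝ) < x + a := by
      have := hx.out; linarith
    have h1 : HasDerivAt (fun x : ℝ => x + a) 1 x := (hasDerivAt_id x).add_const a
    have h2 := (Real.hasDerivAt_rpow_const (x := x + a) (p := -α)
      (Or.inl hxa.ne')).comp x h1
    simp only [mul_one] at h2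
    exact h2.hasDerivWithinAt
  have hbound : ∀ x ∈ Set.Ici (0 : ℝ),
      ‖-α * (x + a) ^ (-α - 1)‖ ≤ α * a ^ (-α - 1) := by
    intro x hx
    have hxa : (0 : ℝ) < x + a := by have := hx.out; linarith
    have h3 : (x + a) ^ (-α - 1) ≤ a ^ (-α - 1) :=
      Real.rpow_le_rpow_of_nonpos ha (by linarith [hx.out]) (by linarith)
    have h4 : (0:ℝ) ≤ (x + a) ^ (-α - 1) := (Real.rpow_pos_of_pos hxa _).le
    rw [norm_mul, Real.norm_eq_abs, Real.norm_eq_abs, abs_neg, abs_of_pos hα,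
      abs_of_nonneg h4]
    exact mul_le_mul_of_nonneg_left h3 hα.le
  have := hconv.norm_image_sub_le_of_norm_hasDerivWithin_le hderiv hbound hD' hD
  simpa [Real.norm_eq_abs] using this

/-- The stationary Barenblatt profile. -/
noncomputable def V (N : ℕ) (p D : ℝ) (y : EuclideanSpace ℝ (Fin N)) : ℝ :=
  (D + (2 - p) / p * ‖y‖ ^ (p / (p - 1))) ^ (-((p - 1) / (2 - p)))

theorem decay_of_trapped_functions {N : ℕ} (p D D₁ D₂ : ℝ) (hp1 : 1 < p) (hp2 : p < 2)
    (hD2 : 0 < D₂) (hD12 : D₂ ≤ D₁) (hD : 0 ≤ D)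
    (v : EuclideanSpace ℝ (Fin N) → ℝ) (hv : Measurable v) (hv0 : ∀ y, 0 ≤ v y)
    (htrap : ∀ y : EuclideanSpace ℝ (Fin N), 1 ≤ ‖y‖ → V N p D₁ y ≤ v y ∧ v y ≤ V N p D₂ y) :
    ∃ C : ℝ, 0 < C ∧ ∀ y : EuclideanSpace ℝ (Fin N), 1 ≤ ‖y‖ →
      |v y - V N p D y| ≤ C * ‖y‖ ^ (-(p / ((p - 1) * (2 - p)))) := by
  have hp0 : (0:ℝ) < p := by linarith
  set c : ℝ := (2 - p) / p with hc_def
  set α : ℝ := (p - 1) / (2 - p) with hα_def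
  set q : ℝ := p / (p - 1) with hq_def
  have hc : 0 < c := div_pos (by linarith) hp0
  have hα : 0 < α := div_pos (by linarith) (by linarith)
  refine ⟨α * c ^ (-α - 1) * (|D₁ - D| + |D₂ - D| + 1), by positivity, ?_⟩
  intro y hy
  set t : ℝ := ‖y‖ with ht_def
  have ht0 : (0:ℝ) < t := by linarith
  have ha : 0 < c * t ^ q := mul_pos hc (Real.rpow_pos_of_pos ht0 _)
  have hVeq : ∀ D' : ℝ, V N p D' y = (D' + c * t ^ q) ^ (-α) := fun D' => rfl
  have h1 := key_lip (c * t ^ q) α D₁ D ha hα (le_trans hD2.le hD12) hD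
  have h2 := key_lip (c * t ^ q) α D₂ D ha hα hD2.le hD
  have hsplit : (c * t ^ q) ^ (-α - 1) = c ^ (-α - 1) * t ^ (-(p / ((p - 1) * (2 - p)))) := by
    rw [Real.mul_rpow hc.le (Real.rpow_pos_of_pos ht0 _).le, ← Real.rpow_mul ht0.le]
    congr 1
    rw [hq_def, hα_def]
    have e1 : p - 1 ≠ 0 := by linarith
    have e2 : (2:ℝ) - p ≠ 0 := by linarith
    field_simp
    ring
  rw [hsplit] at h1 h2
  have htrap' := htrap y hy
  rw [hVeq D₁, hVeq D₂] at htrap'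
  rw [hVeq D]
  have habs1 : (D₁ + c * t ^ q) ^ (-α) - (D + c * t ^ q) ^ (-α) ≥
      -|(D₁ + c * t ^ q) ^ (-α) - (D + c * t ^ q) ^ (-α)| := neg_abs_le _
  have habs2 : (D₂ + c * t ^ q) ^ (-α) - (D + c * t ^ q) ^ (-α) ≤
      |(D₂ + c * t ^ q) ^ (-α) - (D + c * t ^ q) ^ (-α)| := le_abs_self _
  have hT : (0:ℝ) < t ^ (-(p / ((p - 1) * (2 - p)))) := Real.rpow_pos_of_pos ht0 _
  have hB : (0:ℝ) < α * c ^ (-α - 1) := by positivity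
  rw [abs_le]
  constructor
  · nlinarith [htrap'.1, abs_nonneg (D₁ - D), abs_nonneg (D₂ - D), mul_pos hB hT]
  · nlinarith [htrap'.2, abs_nonneg (D₁ - D), abs_nonneg (D₂ - D), mul_pos hB hT]
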